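/- Let B be a finite set of source elements of a set Y, and for each β ∈ B define β̂(y) = min{β(u) | u ∈ B_y}. Then the set B̂ = {β̂ | β ∈ B} is consistent: whenever β̂(u) < β̂(v) for some β ∈ B, then δ̂(u) ≤ δ̂(v) for all δ ∈ B. -/
import Mathlib


/-- A source element of `Y`: values in `[0,1]`, finite support, total weight at most 1. -/
def IsSourceElem {Y : Type*} (β : Y → ℝ) : Prop :=
  (∀ y, 0 ≤ β y ∧ β y ≤ 1) ∧ (Function.support β).Finite ∧ ∑ᶠ y, β y ≤ 1

/-- The strict preference step of `B`: `u ⊲_δ v` (i.e. `δ u < δ v`) for some `δ ∈ B`. -/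
def LtRel {Y : Type*} (B : Set (Y → ℝ)) (u v : Y) : Prop :=
  ∃ δ ∈ B, δ u < δ v

/-- The consistency class of `B` at `y`: `{y}` together with all `u` lying in a common
`⊲`-cycle with `y` in `B`. -/
def consClass {Y : Type*} (B : Set (Y → ℝ)) (y : Y) : Set Y :=
  {y} ∪ {u | Relation.TransGen (LtRel B) u y ∧ Relation.TransGen (LtRel B) y u}

/-- `β̂(y) = min {β(u) | u ∈ B_y}` (as an infimum; the minimum is attained since
`β` takes only finitely many values). -/
noncomputable def hatOf {Y : Type*} (B : Set (Y → ℝ)) (β : Y → ℝ) : Y → ℝ :=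
  fun y => sInf (β '' consClass B y)

/-- The set `B̂ = {β̂ | β ∈ B}` is consistent: whenever `β̂(u) < β̂(v)` for some
`β ∈ B`, then `δ̂(u) ≤ δ̂(v)` for all `δ ∈ B`. -/
theorem hatSet_consistent {Y : Type*} (B : Set (Y → ℝ))
    (hfin : B.Finite) (hsrc : ∀ β ∈ B, IsSourceElem β) :
    ∀ β ∈ B, ∀ δ ∈ B, ∀ u v : Y,
      hatOf B β u < hatOf B β v → hatOf B δ u ≤ hatOf B δ v := by
  intro β hβB δ hδB u v hlt
  have hbdd : ∀ γ ∈ B, ∀ y : Y, BddBelow (γ '' consClass B y) := by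
    intro γ hγ y
    refine ⟨0, ?_⟩
    rintro x ⟨z, -, rfl⟩
    exact ((hsrc γ hγ).1 z).1
  have hne : ∀ (γ : Y → ℝ) (y : Y), (γ '' consClass B y).Nonempty := by
    intro γ y
    exact ⟨γ y, Set.mem_image_of_mem γ (Or.inl rfl)⟩
  by_contra hcon
  push_neg at hcon
  -- get w ∈ consClass B v with δ w < hatOf B δ u
  obtain ⟨x, hxmem, hxlt⟩ :=
    (csInf_lt_iff (hbdd δ hδB v) (hne δ v)).1 hcon
  obtain ⟨w, hwv, rfl⟩ := hxmem
  -- get z ∈ consClass B u with β z < hatOf B β v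
  obtain ⟨x', hx'mem, hx'lt⟩ :=
    (csInf_lt_iff (hbdd β hβB u) (hne β u)).1 hlt
  obtain ⟨z, hzu, rfl⟩ := hx'mem
  have hβzw : β z < β w :=
    lt_of_lt_of_le hx'lt (csInf_le (hbdd β hβB v) (Set.mem_image_of_mem β hwv))
  have hδwu : δ w < δ u :=
    lt_of_lt_of_le hxlt (csInf_le (hbdd δ hδB u)
      (Set.mem_image_of_mem δ (Or.inl rfl)))
  have tuw : Relation.TransGen (LtRel B) u w := by
    rcases hzu with h | ⟨hzu', huz'⟩
    · cases h
      exact Relation.TransGen.single ⟨β, hβB, hβzw⟩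
    · exact huz'.tail ⟨β, hβB, hβzw⟩
  have twu : Relation.TransGen (LtRel B) w u :=
    Relation.TransGen.single ⟨δ, hδB, hδwu⟩
  have hwmem : w ∈ consClass B u := Or.inr ⟨twu, tuw⟩
  have : hatOf B δ u ≤ δ w :=
    csInf_le (hbdd δ hδB u) (Set.mem_image_of_mem δ hwmem)
  linarith
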